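/- arXiv:2203.01901 — 2 statements merged into one kernel-verified Lean document; each statement's English description precedes it below -/
import Mathlib

section
/- Let K be a subgroup of ℤ² and let k be the greatest common divisor of the greatest divisors of all nonzero vectors of K. Then K contains a vector whose greatest divisor is exactly k; equivalently, if the gcd of all coordinates of all vectors in K is k, some single vector of K has coordinate gcd equal to k. -/
/-- Key lemma: if `gcd(a, b, c) = 1` and `a ≠ 0`, the arithmetic progression
`b + n*c` contains an element coprime to `a`. -/
lemma coprime_prog (a b c : ℤ) (ha : a ≠ 0) (h : Int.gcd a (Int.gcd b c) = 1) :
    ∃ n : ℤ, Int.gcd a (b + n * c) = 1 := by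
  classical
  set S : Finset ℕ := a.natAbs.primeFactors.filter (fun p => ¬ (p : ℤ) ∣ b) with hS
  refine ⟨∏ p ∈ S, (p : ℤ), ?_⟩
  set n : ℤ := ∏ p ∈ S, (p : ℤ) with hn
  by_contra hd
  obtain ⟨p, hp, hpd⟩ := Nat.exists_prime_and_dvd hd
  have hpa : (p : ℤ) ∣ a := dvd_trans (Int.natCast_dvd_natCast.2 hpd) (Int.gcd_dvd_left _ _)
  have hpbc : (p : ℤ) ∣ b + n * c := dvd_trans (Int.natCast_dvd_natCast.2 hpd) (Int.gcd_dvd_right _ _)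
  have hpZ : Prime (p : ℤ) := Nat.prime_iff_prime_int.mp hp
  by_cases hpb : (p : ℤ) ∣ b
  · have hpnc : (p : ℤ) ∣ n * c := (dvd_add_right hpb).mp hpbc
    rcases hpZ.dvd_mul.mp hpnc with hpn | hpc
    · rw [hn] at hpn
      obtain ⟨q, hq, hpq⟩ := (hpZ.dvd_finset_prod_iff _).mp hpn
      rw [hS, Finset.mem_filter] at hq
      have hqp : Nat.Prime q := Nat.prime_of_mem_primeFactors hq.1
      have : p = q := (Nat.prime_dvd_prime_iff_eq hp hqp).mp (Int.natCast_dvd_natCast.mp hpq)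
      exact hq.2 (this ▸ hpb)
    · have : (p : ℤ) ∣ (Int.gcd a (Int.gcd b c) : ℤ) :=
        Int.dvd_coe_gcd hpa (Int.dvd_coe_gcd hpb hpc)
      rw [h] at this
      exact hpZ.not_dvd_one (by exact_mod_cast this)
  · have hpmem : p ∈ S := by
      rw [hS, Finset.mem_filter, Nat.mem_primeFactors]
      refine ⟨⟨hp, ?_, Int.natAbs_ne_zero.mpr ha⟩, hpb⟩
      rwa [← Int.natCast_dvd_natCast, Int.dvd_natAbs]
    have hpn : (p : ℤ) ∣ n := hn ▸ Finset.dvd_prod_of_mem _ hpmem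
    have : (p : ℤ) ∣ b := (dvd_add_right (hpn.mul_right c)).mp (by rwa [add_comm] at hpbc)
    exact hpb this

/-- If `a ≠ 0`, then `gcd(a, b + n*c) = gcd(a, b, c)` for a suitable `n`. -/
lemma gcd_prog (a b c : ℤ) (ha : a ≠ 0) :
    ∃ n : ℤ, Int.gcd a (b + n * c) = Int.gcd a (Int.gcd b c) := by
  set g : ℕ := Int.gcd a (Int.gcd b c) with hg
  have hga : (g : ℤ) ∣ a := (Int.gcd_dvd_left _ _)
  have hgbc : (g : ℤ) ∣ (Int.gcd b c : ℤ) := (Int.gcd_dvd_right _ _)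
  have hgb : (g : ℤ) ∣ b := hgbc.trans (Int.gcd_dvd_left _ _)
  have hgc : (g : ℤ) ∣ c := hgbc.trans (Int.gcd_dvd_right _ _)
  obtain ⟨a₁, ha₁⟩ := hga
  obtain ⟨b₁, hb₁⟩ := hgb
  obtain ⟨c₁, hc₁⟩ := hgc
  have hg0 : g ≠ 0 := fun h0 => ha (by simp [ha₁, h0])
  have hbc : Int.gcd b c = g * Int.gcd b₁ c₁ := by
    rw [hb₁, hc₁, Int.gcd_mul_left, Int.natAbs_natCast]
  have key : Int.gcd a ((Int.gcd b c : ℕ) : ℤ) = g * Int.gcd a₁ (Int.gcd b₁ c₁) := by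
    rw [hbc, ha₁, Nat.cast_mul, Int.gcd_mul_left, Int.natAbs_natCast]
  have h1 : Int.gcd a₁ (Int.gcd b₁ c₁) = 1 := by
    refine Nat.eq_of_mul_eq_mul_left (Nat.pos_of_ne_zero hg0) ?_
    rw [← key, ← hg, mul_one]
  have ha₁0 : a₁ ≠ 0 := fun h0 => ha (by simp [ha₁, h0])
  obtain ⟨n, hn⟩ := coprime_prog a₁ b₁ c₁ ha₁0 h1
  refine ⟨n, ?_⟩
  rw [ha₁, hb₁, hc₁]
  have : (g : ℤ) * b₁ + n * ((g : ℤ) * c₁) = (g : ℤ) * (b₁ + n * c₁) := by ring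
  rw [this, Int.gcd_mul_left, Int.natAbs_natCast, hn, mul_one, hg]

/-- If the gcd of all coordinates of all vectors of a subgroup `K ≤ ℤ²` is `k`,
then `K` contains a single vector whose coordinate gcd is exactly `k`. -/
theorem exists_vector_with_gcd (K : AddSubgroup (Fin 2 → ℤ)) (k : ℕ)
    (hdvd : ∀ w ∈ K, ∀ i, (k : ℤ) ∣ w i)
    (hgreatest : ∀ t : ℕ, (∀ w ∈ K, ∀ i, (t : ℤ) ∣ w i) → t ∣ k) :
    ∃ w ∈ K, Int.gcd (w 0) (w 1) = k := by
  classical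
  set e0 : (Fin 2 → ℤ) →+ ℤ := Pi.evalAddMonoidHom (fun _ : Fin 2 => ℤ) 0 with he0
  set e1 : (Fin 2 → ℤ) →+ ℤ := Pi.evalAddMonoidHom (fun _ : Fin 2 => ℤ) 1 with he1
  obtain ⟨a, ha⟩ := Int.subgroup_cyclic (K.map e0)
  -- every first coordinate is a multiple of a
  have hmem0 : ∀ w ∈ K, ∃ m : ℤ, w 0 = m * a := by
    intro w hw
    have : e0 w ∈ K.map e0 := AddSubgroup.mem_map_of_mem e0 hw
    rw [ha, AddSubgroup.mem_closure_singleton] at this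
    obtain ⟨m, hm⟩ := this
    exact ⟨m, by simpa [he0] using hm.symm⟩
  -- some u ∈ K has first coordinate a
  have hau : ∃ u ∈ K, u 0 = a := by
    have : a ∈ K.map e0 := by
      rw [ha]; exact AddSubgroup.mem_closure_singleton_self a
    obtain ⟨u, hu, hue⟩ := this
    exact ⟨u, hu, hue⟩
  obtain ⟨u, huK, hu0⟩ := hau
  by_cases ha0 : a = 0
  · -- all first coordinates vanish
    have hall0 : ∀ w ∈ K, w 0 = 0 := by
      intro w hw
      obtain ⟨m, hm⟩ := hmem0 w hw
      rw [hm, ha0, mul_zero]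
    obtain ⟨c, hc⟩ := Int.subgroup_cyclic (K.map e1)
    have hmem1 : ∀ w ∈ K, ∃ m : ℤ, w 1 = m * c := by
      intro w hw
      have : e1 w ∈ K.map e1 := AddSubgroup.mem_map_of_mem e1 hw
      rw [hc, AddSubgroup.mem_closure_singleton] at this
      obtain ⟨m, hm⟩ := this
      exact ⟨m, by simpa [he1] using hm.symm⟩
    have hcv : ∃ v ∈ K, v 1 = c := by
      have : c ∈ K.map e1 := by
        rw [hc]; exact AddSubgroup.mem_closure_singleton_self c
      obtain ⟨v, hv, hve⟩ := this
      exact ⟨v, hv, hve⟩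
    obtain ⟨v, hvK, hv1⟩ := hcv
    refine ⟨v, hvK, ?_⟩
    have hv0 : v 0 = 0 := hall0 v hvK
    rw [hv0, hv1, Int.gcd_zero_left]
    -- show c.natAbs = k
    have h1 : c.natAbs ∣ k := by
      apply hgreatest
      intro w hw
      rw [Fin.forall_fin_two]
      constructor
      · rw [hall0 w hw]; exact dvd_zero _
      · obtain ⟨m, hm⟩ := hmem1 w hw
        rw [hm]
        exact Dvd.dvd.mul_left (Int.natAbs_dvd.mpr dvd_rfl) m
    have h2 : k ∣ c.natAbs := by
      have := hdvd v hvK 1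
      rw [hv1] at this
      exact Int.natCast_dvd_natCast.mp (Int.dvd_natAbs.mpr this)
    exact Nat.dvd_antisymm h1 h2
  · -- a ≠ 0
    set b : ℤ := u 1 with hb
    obtain ⟨c, hc⟩ := Int.subgroup_cyclic ((K ⊓ e0.ker).map e1)
    have hcv : ∃ v, v ∈ K ∧ v 0 = 0 ∧ v 1 = c := by
      have : c ∈ (K ⊓ e0.ker).map e1 := by
        rw [hc]; exact AddSubgroup.mem_closure_singleton_self c
      obtain ⟨v, hv, hve⟩ := AddSubgroup.mem_map.mp this
      rw [AddSubgroup.mem_inf, AddMonoidHom.mem_ker] at hv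
      exact ⟨v, hv.1, hv.2, hve⟩
    obtain ⟨v, hvK, hv0, hv1⟩ := hcv
    -- decomposition of elements of K
    have hdecomp : ∀ w ∈ K, ∃ m nn : ℤ, w 0 = m * a ∧ w 1 = m * b + nn * c := by
      intro w hw
      obtain ⟨m, hm⟩ := hmem0 w hw
      have hw' : w - m • u ∈ K ⊓ e0.ker := by
        rw [AddSubgroup.mem_inf, AddMonoidHom.mem_ker]
        constructor
        · exact sub_mem hw (zsmul_mem huK m)
        · show (w - m • u) 0 = 0
          simp [hm, hu0, mul_comm]
      have : e1 (w - m • u) ∈ (K ⊓ e0.ker).map e1 :=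
        AddSubgroup.mem_map_of_mem e1 hw'
      rw [hc, AddSubgroup.mem_closure_singleton] at this
      obtain ⟨nn, hnn⟩ := this
      refine ⟨m, nn, hm, ?_⟩
      have h2 : nn * c = w 1 - m * u 1 := by simpa [he1] using hnn
      rw [hb]
      linarith [h2]
    set g : ℕ := Int.gcd a (Int.gcd b c) with hg
    have hgk : g = k := by
      apply Nat.dvd_antisymm
      · apply hgreatest
        intro w hw
        obtain ⟨m, nn, h0, h1⟩ := hdecomp w hw
        rw [Fin.forall_fin_two]
        have hga : (g : ℤ) ∣ a := (Int.gcd_dvd_left _ _)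
        have hgbc : (g : ℤ) ∣ (Int.gcd b c : ℤ) := (Int.gcd_dvd_right _ _)
        have hgb : (g : ℤ) ∣ b := hgbc.trans (Int.gcd_dvd_left _ _)
        have hgc : (g : ℤ) ∣ c := hgbc.trans (Int.gcd_dvd_right _ _)
        constructor
        · rw [h0]; exact hga.mul_left m
        · rw [h1]; exact dvd_add (hgb.mul_left m) (hgc.mul_left nn)
      · have hka : (k : ℤ) ∣ a := hu0 ▸ hdvd u huK 0
        have hkb : (k : ℤ) ∣ b := hdvd u huK 1
        have hkc : (k : ℤ) ∣ c := hv1 ▸ hdvd v hvK 1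
        have : (k : ℤ) ∣ (g : ℤ) := Int.dvd_coe_gcd hka (Int.dvd_coe_gcd hkb hkc)
        exact_mod_cast this
    obtain ⟨n, hn⟩ := gcd_prog a b c ha0
    refine ⟨u + n • v, add_mem huK (zsmul_mem hvK n), ?_⟩
    have e0eq : (u + n • v) 0 = a := by
      show u 0 + n • v 0 = a
      rw [hu0, hv0, smul_zero, add_zero]
    have e1eq : (u + n • v) 1 = b + n * c := by
      show u 1 + n • v 1 = b + n * c
      rw [hv1, smul_eq_mul, hb]
    rw [e0eq, e1eq, hn, ← hg, hgk]
end

section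
/- Every cubic sublattice Γ ⊆ ℤ³ with edge length e satisfies e²·ℤ³ ⊆ Γ, i.e., every integer vector multiplied by the square of the edge length lies in Γ. -/
/-- Dot product on `ℤ³`. -/
def dot3 (a b : Fin 3 → ℤ) : ℤ := a 0 * b 0 + a 1 * b 1 + a 2 * b 2

/-- Cross product on `ℤ³`. -/
def cross3 (a b : Fin 3 → ℤ) : Fin 3 → ℤ :=
  ![a 1 * b 2 - a 2 * b 1, a 2 * b 0 - a 0 * b 2, a 0 * b 1 - a 1 * b 0]

/-- A vector of `ℤ³` is primitive if its coordinates are coprime. -/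
def Primitive (v : Fin 3 → ℤ) : Prop := Int.gcd (Int.gcd (v 0) (v 1)) (v 2) = 1

/-- A cubic sublattice of `ℤ³` with edge length `d`: a subgroup generated by three
pairwise orthogonal vectors of length `d`. -/
def IsCubicLattice (Γ : AddSubgroup (Fin 3 → ℤ)) (d : ℕ) : Prop :=
  ∃ a b c : Fin 3 → ℤ,
    Γ = AddSubgroup.closure {a, b, c} ∧
    dot3 a b = 0 ∧ dot3 a c = 0 ∧ dot3 b c = 0 ∧
    dot3 a a = (d : ℤ)^2 ∧ dot3 b b = (d : ℤ)^2 ∧ dot3 c c = (d : ℤ)^2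

open Matrix in
lemma cols_orth (a b c : Fin 3 → ℤ) (e : ℤ) (he : e ≠ 0)
    (hab : dot3 a b = 0) (hac : dot3 a c = 0) (hbc : dot3 b c = 0)
    (haa : dot3 a a = e^2) (hbb : dot3 b b = e^2) (hcc : dot3 c c = e^2) :
    ∀ i j, a i * a j + b i * b j + c i * c j = if i = j then e^2 else 0 := by
  simp only [dot3] at hab hac hbc haa hbb hcc
  have qab : (a 0 : ℚ) * b 0 + a 1 * b 1 + a 2 * b 2 = 0 := by
    exact_mod_cast congrArg (fun z : ℤ => (z : ℚ)) hab
  have qac : (a 0 : ℚ) * c 0 + a 1 * c 1 + a 2 * c 2 = 0 := by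
    exact_mod_cast congrArg (fun z : ℤ => (z : ℚ)) hac
  have qbc : (b 0 : ℚ) * c 0 + b 1 * c 1 + b 2 * c 2 = 0 := by
    exact_mod_cast congrArg (fun z : ℤ => (z : ℚ)) hbc
  have qaa : (a 0 : ℚ) * a 0 + a 1 * a 1 + a 2 * a 2 = (e : ℚ)^2 := by
    exact_mod_cast congrArg (fun z : ℤ => (z : ℚ)) haa
  have qbb : (b 0 : ℚ) * b 0 + b 1 * b 1 + b 2 * b 2 = (e : ℚ)^2 := by
    exact_mod_cast congrArg (fun z : ℤ => (z : ℚ)) hbb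
  have qcc : (c 0 : ℚ) * c 0 + c 1 * c 1 + c 2 * c 2 = (e : ℚ)^2 := by
    exact_mod_cast congrArg (fun z : ℤ => (z : ℚ)) hcc
  set M : Matrix (Fin 3) (Fin 3) ℚ :=
    Matrix.of ![fun j => (a j : ℚ), fun j => (b j : ℚ), fun j => (c j : ℚ)] with hM
  have he2 : (e : ℚ)^2 ≠ 0 := by positivity
  have hMMt : M * Mᵀ = ((e : ℚ)^2) • 1 := by
    ext i j
    fin_cases i <;> fin_cases j <;>
      (simp only [hM, Matrix.mul_apply, Matrix.transpose_apply, Fin.sum_univ_three];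
       simp [Matrix.one_apply]) <;>
      first
        | linear_combination qaa | linear_combination qbb | linear_combination qcc
        | linear_combination qab | linear_combination qac | linear_combination qbc
  have hN : ((((e : ℚ)^2)⁻¹ • M) * Mᵀ) = 1 := by
    rw [Matrix.smul_mul, hMMt, smul_smul, inv_mul_cancel₀ he2, one_smul]
  have hN' : (Mᵀ * (((e : ℚ)^2)⁻¹ • M)) = 1 := mul_eq_one_comm.mp hN
  have hMtM : Mᵀ * M = ((e : ℚ)^2) • 1 := by
    have := congrArg (fun A => ((e : ℚ)^2) • A) hN'
    simpa [Matrix.mul_smul, smul_smul, mul_inv_cancel₀ he2] using this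
  intro i j
  have hentry := congrFun (congrFun hMtM i) j
  simp only [hM, Matrix.mul_apply, Fin.sum_univ_three, Matrix.transpose_apply,
    Matrix.smul_apply, Matrix.one_apply, Matrix.of_apply, smul_eq_mul,
    Matrix.cons_val_zero, Matrix.cons_val_one, Matrix.head_cons,
    Matrix.cons_val_two, Matrix.tail_cons] at hentry
  by_cases h : i = j
  · subst h
    simp at hentry ⊢
    exact_mod_cast hentry
  · simp only [if_neg h, mul_zero] at hentry ⊢
    exact_mod_cast hentry

/-- Every cubic sublattice of edge length `e` contains `e² · ℤ³`. -/
theorem sq_edge_smul_mem (Γ : AddSubgroup (Fin 3 → ℤ)) (e : ℕ) (he : 0 < e)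
    (hΓ : IsCubicLattice Γ e) (x : Fin 3 → ℤ) :
    ((e : ℤ)^2) • x ∈ Γ := by
  obtain ⟨a, b, c, rfl, hab, hac, hbc, haa, hbb, hcc⟩ := hΓ
  have he' : (e : ℤ) ≠ 0 := by exact_mod_cast he.ne'
  have H := cols_orth a b c e he' hab hac hbc haa hbb hcc
  have ha : a ∈ AddSubgroup.closure {a, b, c} := AddSubgroup.subset_closure (by simp)
  have hb : b ∈ AddSubgroup.closure {a, b, c} := AddSubgroup.subset_closure (by simp)
  have hc : c ∈ AddSubgroup.closure {a, b, c} := AddSubgroup.subset_closure (by simp)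
  have h00 : a 0 * a 0 + b 0 * b 0 + c 0 * c 0 = (e:ℤ)^2 := by simpa using H 0 0
  have h11 : a 1 * a 1 + b 1 * b 1 + c 1 * c 1 = (e:ℤ)^2 := by simpa using H 1 1
  have h22 : a 2 * a 2 + b 2 * b 2 + c 2 * c 2 = (e:ℤ)^2 := by simpa using H 2 2
  have h01 : a 0 * a 1 + b 0 * b 1 + c 0 * c 1 = 0 := by simpa using H 0 1
  have h02 : a 0 * a 2 + b 0 * b 2 + c 0 * c 2 = 0 := by simpa using H 0 2
  have h12 : a 1 * a 2 + b 1 * b 2 + c 1 * c 2 = 0 := by simpa using H 1 2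
  have key : ((e : ℤ)^2) • x = (dot3 x a) • a + (dot3 x b) • b + (dot3 x c) • c := by
    funext i
    fin_cases i
    · show (e:ℤ)^2 * x 0 = dot3 x a * a 0 + dot3 x b * b 0 + dot3 x c * c 0
      simp only [dot3]
      linear_combination (-(x 0)) * h00 + (-(x 1)) * h01 + (-(x 2)) * h02
    · show (e:ℤ)^2 * x 1 = dot3 x a * a 1 + dot3 x b * b 1 + dot3 x c * c 1
      simp only [dot3]
      linear_combination (-(x 0)) * h01 + (-(x 1)) * h11 + (-(x 2)) * h12
    · show (e:ℤ)^2 * x 2 = dot3 x a * a 2 + dot3 x b * b 2 + dot3 x c * c 2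
      simp only [dot3]
      linear_combination (-(x 0)) * h02 + (-(x 1)) * h12 + (-(x 2)) * h22
  rw [key]
  exact add_mem (add_mem (zsmul_mem ha _) (zsmul_mem hb _)) (zsmul_mem hc _)
end
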